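/- Let X be a real vector space, let K be a cone in X, and let N be a quasi-norm with modulus of concavity C ≥ 1 on the subspace δK = K − K, such that the quasi-normed space (δK, N) is complete (every sequence (y_k) in δK with N(y_k − y_l) → 0 as k, l → ∞ admits y ∈ δK with N(y_k − y) → 0) and K is closed in δK (if x_j ∈ K, y ∈ δK and N(x_j − y) → 0, then y ∈ K). Let Ψ : X → [0, ∞] be a function satisfying: (a) Ψ(t • x) = t · Ψ(x) for every real t ≥ 0 and every x ∈ K; (b') Ψ is sequentially upper semicontinuous on K with respect to N, i.e. if x_j ∈ K, x ∈ K and N(x_j − x) → 0, then limsup_j Ψ(x_j) ≤ Ψ(x). Then the following are equivalent: (1) there exists a constant B > 0 such that Ψ(x) ≤ B · N(x) for all x ∈ K; (2) Ψ(x) < ∞ for all x ∈ K. -/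

import Mathlib

open Pointwise Filter Topology
open scoped ENNReal

/-- **Quasi-Banach boundedness criterion** (upper semicontinuous version).
`K` is a cone in the real vector space `X`, `N` is a quasi-norm with modulus of
concavity `C ≥ 1` on `δK = K - K`, `(δK, N)` is complete, `K` is closed in `δK`,
and `Ψ : X → [0, ∞]` is homogeneous and sequentially upper semicontinuous on `K`
with respect to `N`.  Then `Ψ` is bounded by a multiple of `N` on `K` iff `Ψ` is
finite on `K`. -/
theorem quasiBanach_bounded_iff_finite_of_usc
    {X : Type*} [AddCommGroup X] [Module ℝ X]
    (K : Set X) (hKne : K.Nonempty)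
    (hKadd : ∀ x ∈ K, ∀ y ∈ K, x + y ∈ K)
    (hKsmul : ∀ t : ℝ, 0 ≤ t → ∀ x ∈ K, t • x ∈ K)
    (hKpointed : ∀ x ∈ K, -x ∈ K → x = 0)
    (N : X → ℝ) (C : ℝ) (hC : 1 ≤ C)
    (hNnonneg : ∀ x ∈ K - K, 0 ≤ N x)
    (hNdef : ∀ x ∈ K - K, (N x = 0 ↔ x = 0))
    (hNhom : ∀ t : ℝ, 0 ≤ t → ∀ x ∈ K - K, N (t • x) = t * N x)
    (hNtri : ∀ x ∈ K - K, ∀ y ∈ K - K, N (x + y) ≤ C * (N x + N y))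
    (hComplete : ∀ y : ℕ → X, (∀ k, y k ∈ K - K) →
      (∀ ε : ℝ, 0 < ε → ∃ M : ℕ, ∀ k ≥ M, ∀ l ≥ M, N (y k - y l) < ε) →
      ∃ z ∈ K - K, Tendsto (fun k => N (y k - z)) atTop (𝓝 0))
    (hClosed : ∀ x : ℕ → X, (∀ j, x j ∈ K) → ∀ y ∈ K - K,
      Tendsto (fun j => N (x j - y)) atTop (𝓝 0) → y ∈ K)
    (Ψ : X → ℝ≥0∞)
    (hΨhom : ∀ t : ℝ, 0 ≤ t → ∀ x ∈ K, Ψ (t • x) = ENNReal.ofReal t * Ψ x)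
    (hΨusc : ∀ x : ℕ → X, (∀ j, x j ∈ K) → ∀ x₀ ∈ K,
      Tendsto (fun j => N (x j - x₀)) atTop (𝓝 0) →
      Filter.limsup (fun j => Ψ (x j)) atTop ≤ Ψ x₀) :
    (∃ B : ℝ, 0 < B ∧ ∀ x ∈ K, Ψ x ≤ ENNReal.ofReal (B * N x)) ↔
      (∀ x ∈ K, Ψ x < ⊤) := by
  constructor
  · rintro ⟨B, hB, hBx⟩ x hx
    exact lt_of_le_of_lt (hBx x hx) ENNReal.ofReal_lt_top
  · intro hfin
    by_contra hcon
    push_neg at hcon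
    obtain ⟨x₀, hx₀⟩ := hKne
    have h0K : (0 : X) ∈ K := by simpa using hKsmul 0 le_rfl x₀ hx₀
    have hKsub : ∀ x ∈ K, x ∈ K - K := fun x hx => ⟨x, hx, 0, h0K, by simp⟩
    have hΨ0 : Ψ 0 = 0 := by simpa using hΨhom 0 le_rfl x₀ hx₀
    have hsel : ∀ j : ℕ, ∃ x ∈ K, ENNReal.ofReal (((j : ℝ) + 1) ^ 2 * N x) < Ψ x := by
      intro j
      obtain ⟨x, hx, hlt⟩ := hcon (((j : ℝ) + 1) ^ 2) (by positivity)
      exact ⟨x, hx, hlt⟩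
    choose x hxK hxlt using hsel
    have hNpos : ∀ j, 0 < N (x j) := by
      intro j
      rcases lt_or_eq_of_le (hNnonneg _ (hKsub _ (hxK j))) with h | h
      · exact h
      · exfalso
        have hx0 : x j = 0 := (hNdef _ (hKsub _ (hxK j))).mp h.symm
        have := hxlt j
        rw [← h, hx0, hΨ0] at this
        simp at this
    set t : ℕ → ℝ := fun j => 1 / (((j : ℝ) + 1) * N (x j)) with ht
    have htpos : ∀ j, 0 < t j := fun j => by
      have := hNpos j; rw [ht]; positivity
    set y : ℕ → X := fun j => t j • x j with hy
    have hyK : ∀ j, y j ∈ K := fun j => hKsmul _ (htpos j).le _ (hxK j)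
    have hNy : ∀ j, N (y j) = 1 / ((j : ℝ) + 1) := by
      intro j
      rw [hy]
      simp only
      rw [hNhom _ (htpos j).le _ (hKsub _ (hxK j)), ht]
      have := (hNpos j).ne'
      field_simp
    have hconv : Tendsto (fun j => N (y j - 0)) atTop (𝓝 0) := by
      simp only [sub_zero]
      have : (fun j : ℕ => N (y j)) = fun j : ℕ => 1 / ((j : ℝ) + 1) := funext hNy
      rw [this]
      exact tendsto_one_div_add_atTop_nhds_zero_nat
    have hΨy : ∀ j : ℕ, ENNReal.ofReal ((j : ℝ) + 1) < Ψ (y j) := by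
      intro j
      have h1 : Ψ (y j) = ENNReal.ofReal (t j) * Ψ (x j) :=
        hΨhom _ (htpos j).le _ (hxK j)
      have h2 : ENNReal.ofReal ((j : ℝ) + 1)
          = ENNReal.ofReal (t j) * ENNReal.ofReal (((j : ℝ) + 1) ^ 2 * N (x j)) := by
        rw [← ENNReal.ofReal_mul (htpos j).le]
        congr 1
        rw [ht]
        have := (hNpos j).ne'
        field_simp
      rw [h1, h2]
      exact (ENNReal.mul_lt_mul_iff_right (ENNReal.ofReal_pos.mpr (htpos j)).ne'
        ENNReal.ofReal_ne_top).mpr (hxlt j)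
    have htend : Tendsto (fun j => Ψ (y j)) atTop (𝓝 ⊤) := by
      rw [ENNReal.tendsto_nhds_top_iff_nat]
      intro n
      filter_upwards [eventually_ge_atTop n] with j hj
      refine lt_of_le_of_lt ?_ (hΨy j)
      have : ((n : ℝ≥0∞)) ≤ (j : ℝ≥0∞) := by exact_mod_cast hj
      calc (n : ℝ≥0∞) ≤ (j : ℝ≥0∞) := this
        _ ≤ ENNReal.ofReal ((j : ℝ) + 1) := by
            rw [ENNReal.ofReal_add (by positivity) zero_le_one]
            simp [ENNReal.ofReal_natCast]
    have hlim : Filter.limsup (fun j => Ψ (y j)) atTop = ⊤ := htend.limsup_eq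
    have := hΨusc y hyK 0 h0K hconv
    rw [hlim, hΨ0] at this
    simp at this
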